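/- The degree bound ⌊n/2⌋ for strong connectivity is tight: for every k ≥ 0 there is a digraph D* on n = 4k+2 vertices with δ⁺(D*) = δ⁻(D*) = 2k = ⌊n/2⌋ − 1 that is not strongly connected, namely the digraph obtained from two disjoint complete symmetric digraphs D_1, D_2 each on 2k+1 vertices by adding all arcs from V(D_1) to V(D_2). -/

import Mathlib

variable {V : Type*}

/-- Reachability inside a vertex subset `S` of the digraph with arc relation `A`. -/
def ReachIn (A : V → V → Prop) (S : Set V) : V → V → Prop :=
  Relation.ReflTransGen (fun u v => u ∈ S ∧ v ∈ S ∧ A u v)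

/-- The sub-digraph induced on `S` is strongly connected. -/
def StrongIn (A : V → V → Prop) (S : Set V) : Prop :=
  ∀ u ∈ S, ∀ v ∈ S, ReachIn A S u v

/-- `M` is a strongly connected component of the sub-digraph induced on `S`. -/
def IsSCCIn (A : V → V → Prop) (S M : Set V) : Prop :=
  ∃ v ∈ S, M = {u | u ∈ S ∧ ReachIn A S u v ∧ ReachIn A S v u}

/-- There is an arc from (some vertex of) `M` to (some vertex of) `N`. -/
def HasArc (A : V → V → Prop) (M N : Set V) : Prop :=
  ∃ u ∈ M, ∃ w ∈ N, A u w

/-- `S` is a safe set of the sub-digraph of `A` induced on `H`. -/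
def SafeSetIn (A : V → V → Prop) (H S : Set V) : Prop :=
  S.Nonempty ∧ S ⊆ H ∧
    (∀ M, IsSCCIn A (H \ S) M → ∃ N, IsSCCIn A S N ∧ HasArc A M N) ∧
    (∀ M N, IsSCCIn A (H \ S) M → IsSCCIn A S N → HasArc A M N → M.ncard ≤ N.ncard)

/-- `S` is a safe set of the digraph with arc relation `A`. -/
def SafeSet (A : V → V → Prop) (S : Set V) : Prop :=
  SafeSetIn A Set.univ S

/-- `S` is a strong safe set: a safe set inducing a strongly connected sub-digraph. -/
def StrongSafeSet (A : V → V → Prop) (S : Set V) : Prop :=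
  SafeSet A S ∧ StrongIn A S

/-- A digraph is `k`-strong if it has at least `k+1` vertices and deleting any
fewer than `k` vertices leaves a strongly connected digraph. -/
def KStrong [Fintype V] (A : V → V → Prop) (k : ℕ) : Prop :=
  k + 1 ≤ Fintype.card V ∧ ∀ X : Set V, X.ncard < k → StrongIn A Xᶜ

/-- An oriented graph: no loops and no 2-cycles. -/
def Oriented (A : V → V → Prop) : Prop :=
  ∀ u v, A u v → ¬ A v u

/-- A tournament: no loops, and exactly one arc between any two distinct vertices. -/
def IsTournament (A : V → V → Prop) : Prop :=
  (∀ v, ¬ A v v) ∧ ∀ u v : V, u ≠ v → (A u v ↔ ¬ A v u)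

/-- An acyclic digraph: no arc lies on a directed cycle. -/
def AcyclicDigraph (A : V → V → Prop) : Prop :=
  ∀ u v, A u v → ¬ ReachIn A Set.univ v u

/-- `S` is in-dominating: every vertex outside `S` has an out-neighbour in `S`. -/
def InDominating (A : V → V → Prop) (S : Set V) : Prop :=
  ∀ v, v ∉ S → ∃ w ∈ S, A v w

/-- An independent set of a digraph: no arc between any two of its vertices. -/
def IndepSet (A : V → V → Prop) (I : Set V) : Prop :=
  ∀ u ∈ I, ∀ v ∈ I, u ≠ v → ¬ A u v

noncomputable def outDeg (A : V → V → Prop) (v : V) : ℕ := {w | A v w}.ncard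
noncomputable def inDeg (A : V → V → Prop) (v : V) : ℕ := {w | A w v}.ncard

/-- The safe number: minimum cardinality of a safe set. -/
noncomputable def safeNum (A : V → V → Prop) : ℕ :=
  sInf {n | ∃ S : Set V, SafeSet A S ∧ S.ncard = n}

/-- The strong safe number: minimum cardinality of a strong safe set. -/
noncomputable def strongSafeNum (A : V → V → Prop) : ℕ :=
  sInf {n | ∃ S : Set V, StrongSafeSet A S ∧ S.ncard = n}

/-- The sub-digraph induced on `S` is acyclic. -/
def AcyclicIn (A : V → V → Prop) (S : Set V) : Prop :=
  ∀ u ∈ S, ∀ v ∈ S, A u v → ¬ ReachIn A S v u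


/-- Two complete symmetric digraphs on `2k+1` vertices with all arcs added from
the first to the second. -/
def twoCliqueDigraph (k : ℕ) :
    (Fin (2 * k + 1) ⊕ Fin (2 * k + 1)) → (Fin (2 * k + 1) ⊕ Fin (2 * k + 1)) → Prop :=
  fun a b =>
    match a, b with
    | Sum.inl u, Sum.inl v => u ≠ v
    | Sum.inr u, Sum.inr v => u ≠ v
    | Sum.inl _, Sum.inr _ => True
    | Sum.inr _, Sum.inl _ => False

section Aux
variable (k : ℕ)

lemma ncard_ne_aux (u : Fin (2 * k + 1)) : ({v : Fin (2 * k + 1) | v ≠ u}).ncard = 2 * k := by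
  have : ({v : Fin (2 * k + 1) | v ≠ u}) = ({u} : Set (Fin (2 * k + 1)))ᶜ := by
    ext v; simp
  have h2 := Set.ncard_add_ncard_compl ({u} : Set (Fin (2 * k + 1)))
  rw [this]
  simp [Set.ncard_univ] at h2 ⊢
  omega

lemma outDeg_inr (u : Fin (2 * k + 1)) :
    outDeg (twoCliqueDigraph k) (Sum.inr u) = 2 * k := by
  have h : {w | twoCliqueDigraph k (Sum.inr u) w} =
      Sum.inr '' {v : Fin (2 * k + 1) | v ≠ u} := by
    ext w; cases w with
    | inl v => simp [twoCliqueDigraph]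
    | inr v => simp [twoCliqueDigraph, eq_comm]
  rw [outDeg, h, Set.ncard_image_of_injective _ Sum.inr_injective, ncard_ne_aux]

lemma inDeg_inl (u : Fin (2 * k + 1)) :
    inDeg (twoCliqueDigraph k) (Sum.inl u) = 2 * k := by
  have h : {w | twoCliqueDigraph k w (Sum.inl u)} =
      Sum.inl '' {v : Fin (2 * k + 1) | v ≠ u} := by
    ext w; cases w with
    | inl v => simp [twoCliqueDigraph, eq_comm]
    | inr v => simp [twoCliqueDigraph]
  rw [inDeg, h, Set.ncard_image_of_injective _ Sum.inl_injective, ncard_ne_aux]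

end Aux

theorem stmt17' (k : ℕ) :
    Fintype.card (Fin (2 * k + 1) ⊕ Fin (2 * k + 1)) = 4 * k + 2 ∧
      (∀ v, 2 * k ≤ outDeg (twoCliqueDigraph k) v ∧ 2 * k ≤ inDeg (twoCliqueDigraph k) v) ∧
      (∃ v, outDeg (twoCliqueDigraph k) v = 2 * k) ∧
      (∃ v, inDeg (twoCliqueDigraph k) v = 2 * k) ∧
      2 * k = (4 * k + 2) / 2 - 1 ∧
      ¬ StrongIn (twoCliqueDigraph k) Set.univ := by
  have hcard : Fintype.card (Fin (2 * k + 1) ⊕ Fin (2 * k + 1)) = 4 * k + 2 := by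
    simp; omega
  have hinr_univ : (Sum.inr '' (Set.univ : Set (Fin (2 * k + 1))) :
      Set (Fin (2 * k + 1) ⊕ Fin (2 * k + 1))).ncard = 2 * k + 1 := by
    rw [Set.ncard_image_of_injective _ Sum.inr_injective, Set.ncard_univ]
    simp
  have hinl_univ : (Sum.inl '' (Set.univ : Set (Fin (2 * k + 1))) :
      Set (Fin (2 * k + 1) ⊕ Fin (2 * k + 1))).ncard = 2 * k + 1 := by
    rw [Set.ncard_image_of_injective _ Sum.inl_injective, Set.ncard_univ]
    simp
  refine ⟨hcard, ?_, ⟨Sum.inr 0, outDeg_inr k 0⟩, ⟨Sum.inl 0, inDeg_inl k 0⟩, by omega, ?_⟩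
  · intro v
    cases v with
    | inl u =>
      constructor
      · have hsub : Sum.inr '' (Set.univ : Set (Fin (2 * k + 1))) ⊆
            {w | twoCliqueDigraph k (Sum.inl u) w} := by
          rintro w ⟨v, -, rfl⟩; trivial
        have := Set.ncard_le_ncard hsub (Set.toFinite _)
        rw [hinr_univ] at this; unfold outDeg; omega
      · rw [inDeg_inl]
    | inr u =>
      constructor
      · rw [outDeg_inr]
      · have hsub : Sum.inl '' (Set.univ : Set (Fin (2 * k + 1))) ⊆
            {w | twoCliqueDigraph k w (Sum.inr u)} := by
          rintro w ⟨v, -, rfl⟩; trivial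
        have := Set.ncard_le_ncard hsub (Set.toFinite _)
        rw [hinl_univ] at this; unfold inDeg; omega
  · intro hstrong
    have h := hstrong (Sum.inr 0) trivial (Sum.inl 0) trivial
    have key : ∀ b, ReachIn (twoCliqueDigraph k) Set.univ (Sum.inr 0) b →
        ∃ x, b = Sum.inr x := by
      intro b hb
      induction hb with
      | refl => exact ⟨0, rfl⟩
      | @tail b c hbc hstep ih =>
        obtain ⟨x, rfl⟩ := ih
        obtain ⟨-, -, harc⟩ := hstep
        cases c with
        | inl v => exact absurd harc (by simp [twoCliqueDigraph])
        | inr v => exact ⟨v, rfl⟩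
    obtain ⟨x, hx⟩ := key _ h
    exact Sum.inl_ne_inr hx


theorem stmt17 (k : ℕ) :
    Fintype.card (Fin (2 * k + 1) ⊕ Fin (2 * k + 1)) = 4 * k + 2 ∧
      (∀ v, 2 * k ≤ outDeg (twoCliqueDigraph k) v ∧ 2 * k ≤ inDeg (twoCliqueDigraph k) v) ∧
      (∃ v, outDeg (twoCliqueDigraph k) v = 2 * k) ∧
      (∃ v, inDeg (twoCliqueDigraph k) v = 2 * k) ∧
      2 * k = (4 * k + 2) / 2 - 1 ∧
      ¬ StrongIn (twoCliqueDigraph k) Set.univ := stmt17' k
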